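/- If there exists a Hermitian X_T with R_{X_T} invertible and ρ(T̂_{X_T}) < 1, then the set S_≥ := {X Hermitian : ∃ such X_T, C_{T_{X_T}}(X) ≥ H_{X_T}} is nonempty; indeed, for any such X_T the equation C_{T_{X_T}}(X) = H_{X_T} has a (unique) Hermitian solution X, which lies in S_≥. -/

import Mathlib

open Matrix Filter Topology
open scoped ComplexOrder

noncomputable section

namespace CDARE

variable {n m : ℕ}

/-- Entrywise complex conjugate of a matrix. -/
def mconj {p q : ℕ} (M : Matrix (Fin p) (Fin q) ℂ) : Matrix (Fin p) (Fin q) ℂ :=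
  M.map (starRingEnd ℂ)

/-- `hatM M = conj M * M`. -/
def hatM (M : Matrix (Fin n) (Fin n) ℂ) : Matrix (Fin n) (Fin n) ℂ := mconj M * M

/-- `R_X = R + Bᴴ X̄ B`. -/
def RX (R : Matrix (Fin m) (Fin m) ℂ) (B : Matrix (Fin n) (Fin m) ℂ)
    (X : Matrix (Fin n) (Fin n) ℂ) : Matrix (Fin m) (Fin m) ℂ :=
  R + Bᴴ * mconj X * B

/-- `F_X = R_X⁻¹ Bᴴ X̄ A`. -/
def FX (A : Matrix (Fin n) (Fin n) ℂ) (B : Matrix (Fin n) (Fin m) ℂ)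
    (R : Matrix (Fin m) (Fin m) ℂ) (X : Matrix (Fin n) (Fin n) ℂ) :
    Matrix (Fin m) (Fin n) ℂ :=
  (RX R B X)⁻¹ * (Bᴴ * mconj X * A)

/-- `T_X = A - B F_X`. -/
def TX (A : Matrix (Fin n) (Fin n) ℂ) (B : Matrix (Fin n) (Fin m) ℂ)
    (R : Matrix (Fin m) (Fin m) ℂ) (X : Matrix (Fin n) (Fin n) ℂ) :
    Matrix (Fin n) (Fin n) ℂ :=
  A - B * FX A B R X

/-- The Riccati operator `R(X)`. -/
def Rop (A : Matrix (Fin n) (Fin n) ℂ) (B : Matrix (Fin n) (Fin m) ℂ)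
    (R : Matrix (Fin m) (Fin m) ℂ) (H : Matrix (Fin n) (Fin n) ℂ)
    (X : Matrix (Fin n) (Fin n) ℂ) : Matrix (Fin n) (Fin n) ℂ :=
  Aᴴ * mconj X * A - Aᴴ * mconj X * B * (RX R B X)⁻¹ * (Bᴴ * mconj X * A) + H

/-- `H_X = H + F_Xᴴ R F_X`. -/
def HX (A : Matrix (Fin n) (Fin n) ℂ) (B : Matrix (Fin n) (Fin m) ℂ)
    (R : Matrix (Fin m) (Fin m) ℂ) (H : Matrix (Fin n) (Fin n) ℂ)
    (X : Matrix (Fin n) (Fin n) ℂ) : Matrix (Fin n) (Fin n) ℂ :=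
  H + (FX A B R X)ᴴ * R * FX A B R X

/-- `K(Y, X) = (F_Y - F_X)ᴴ R_X (F_Y - F_X)`. -/
def Kop (A : Matrix (Fin n) (Fin n) ℂ) (B : Matrix (Fin n) (Fin m) ℂ)
    (R : Matrix (Fin m) (Fin m) ℂ) (Y X : Matrix (Fin n) (Fin n) ℂ) :
    Matrix (Fin n) (Fin n) ℂ :=
  (FX A B R Y - FX A B R X)ᴴ * RX R B X * (FX A B R Y - FX A B R X)

/-- Conjugate Stein operator `C_C(X) = X - Cᴴ X̄ C`. -/
def CStein (C X : Matrix (Fin n) (Fin n) ℂ) : Matrix (Fin n) (Fin n) ℂ :=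
  X - Cᴴ * mconj X * C

/-- The set `S_≥`. -/
def Sge (A : Matrix (Fin n) (Fin n) ℂ) (B : Matrix (Fin n) (Fin m) ℂ)
    (R : Matrix (Fin m) (Fin m) ℂ) (H : Matrix (Fin n) (Fin n) ℂ) :
    Set (Matrix (Fin n) (Fin n) ℂ) :=
  {X | X.IsHermitian ∧ ∃ XT : Matrix (Fin n) (Fin n) ℂ, XT.IsHermitian ∧
      IsUnit (RX R B XT) ∧ spectralRadius ℂ (hatM (TX A B R XT)) < 1 ∧
      (CStein (TX A B R XT) X - HX A B R H XT).PosSemidef}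


/-! ### Auxiliary lemmas -/

lemma mconj_mul {p q r : ℕ} (A : Matrix (Fin p) (Fin q) ℂ) (B : Matrix (Fin q) (Fin r) ℂ) :
    mconj (A * B) = mconj A * mconj B := Matrix.map_mul

@[simp] lemma mconj_mconj {p q : ℕ} (A : Matrix (Fin p) (Fin q) ℂ) :
    mconj (mconj A) = A := by ext i j; simp [mconj]

lemma conjTranspose_mconj {p q : ℕ} (A : Matrix (Fin p) (Fin q) ℂ) :
    (mconj A)ᴴ = mconj (Aᴴ) := by ext i j; simp [mconj]

lemma mconj_add {p q : ℕ} (A B : Matrix (Fin p) (Fin q) ℂ) :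
    mconj (A + B) = mconj A + mconj B := by ext i j; simp [mconj]

lemma mconj_smul {p q : ℕ} (r : ℝ) (A : Matrix (Fin p) (Fin q) ℂ) :
    mconj (r • A) = r • mconj A := by
  ext i j; simp [mconj, Complex.real_smul]

/-- Frobenius-norm entry bound. -/
lemma entry_le_frob {p : ℕ} (A : Matrix (Fin p) (Fin p) ℂ) (i j : Fin p) :
    letI := Matrix.frobeniusSeminormedAddCommGroup (α := ℂ) (m := Fin p) (n := Fin p)
    ‖A i j‖₊ ≤ ‖A‖₊ := by
  letI := Matrix.frobeniusSeminormedAddCommGroup (α := ℂ) (m := Fin p) (n := Fin p)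
  rw [Matrix.frobenius_nnnorm_def]
  have h1 : ‖A i j‖₊ = (‖A i j‖₊ ^ (2:ℝ)) ^ (1/2:ℝ) := by
    rw [← NNReal.rpow_mul]; norm_num
  rw [h1]
  apply NNReal.rpow_le_rpow _ (by norm_num)
  calc ‖A i j‖₊ ^ (2:ℝ) ≤ ∑ j', ‖A i j'‖₊ ^ (2:ℝ) :=
        Finset.single_le_sum (f := fun j' => ‖A i j'‖₊ ^ (2:ℝ))
          (fun _ _ => zero_le) (Finset.mem_univ j)
    _ ≤ ∑ i', ∑ j', ‖A i' j'‖₊ ^ (2:ℝ) :=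
        Finset.single_le_sum (f := fun i' => ∑ j', ‖A i' j'‖₊ ^ (2:ℝ))
          (fun _ _ => zero_le) (Finset.mem_univ i)

/-- Powers of a matrix with spectral radius `< 1` tend to zero entrywise. -/
lemma pow_entry_tendsto_zero {p : ℕ} (M : Matrix (Fin p) (Fin p) ℂ)
    (h : spectralRadius ℂ M < 1) (i j : Fin p) :
    Tendsto (fun k => (M ^ k) i j) atTop (𝓝 0) := by
  letI := Matrix.frobeniusNormedRing (α := ℂ) (m := Fin p)
  letI := Matrix.frobeniusNormedAlgebra (α := ℂ) (m := Fin p) (R := ℂ)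
  letI : CompleteSpace (Matrix (Fin p) (Fin p) ℂ) := FiniteDimensional.complete ℂ _
  obtain ⟨r, hr1, hr2⟩ := ENNReal.lt_iff_exists_nnreal_btwn.mp h
  have hgel := spectrum.pow_nnnorm_pow_one_div_tendsto_nhds_spectralRadius M
  have hev : ∀ᶠ k : ℕ in atTop, (‖M ^ k‖₊ : ENNReal) ^ (1/(k:ℝ)) < (r : ENNReal) :=
    hgel.eventually_lt_const hr1
  have hr2' : (r : ℝ) < 1 := by exact_mod_cast hr2
  have hbound : ∀ᶠ k : ℕ in atTop, ‖(M ^ k) i j‖ ≤ (r : ℝ) ^ k := by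
    filter_upwards [hev, eventually_ge_atTop 1] with k hk hk1
    have hk0 : (k : ℝ) ≠ 0 := by positivity
    have h2 : ((‖M ^ k‖₊ : ENNReal) ^ (1/(k:ℝ))) ^ (k:ℝ) ≤ (r : ENNReal) ^ (k:ℝ) :=
      ENNReal.rpow_le_rpow hk.le (Nat.cast_nonneg k)
    rw [← ENNReal.rpow_mul, one_div, inv_mul_cancel₀ hk0, ENNReal.rpow_one] at h2
    have h3 : (‖M ^ k‖₊ : ENNReal) ≤ ((r ^ k : NNReal) : ENNReal) := by
      rwa [ENNReal.coe_pow, ← ENNReal.rpow_natCast]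
    have h4 : ‖M ^ k‖₊ ≤ r ^ k := by exact_mod_cast h3
    have h5 : ‖(M ^ k) i j‖₊ ≤ r ^ k := le_trans (entry_le_frob (M ^ k) i j) h4
    calc ‖(M ^ k) i j‖ ≤ ((r ^ k : NNReal) : ℝ) := h5
      _ = (r : ℝ) ^ k := by push_cast; ring
  exact squeeze_zero_norm' hbound
    (tendsto_pow_atTop_nhds_zero_of_lt_one r.coe_nonneg hr2')

/-- A fixed point of the conjugate Stein map is zero when `ρ(hatM T) < 1`. -/
lemma fixed_eq_zero {p : ℕ} (T X : Matrix (Fin p) (Fin p) ℂ)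
    (hρ : spectralRadius ℂ (hatM T) < 1) (hX : X = Tᴴ * mconj X * T) : X = 0 := by
  set M := hatM T with hMdef
  have h2 : mconj X = mconj Tᴴ * X * mconj T := by
    conv_lhs => rw [hX]
    rw [mconj_mul, mconj_mul, mconj_mconj]
  have hM : X = Mᴴ * X * M := by
    calc X = Tᴴ * mconj X * T := hX
      _ = Tᴴ * (mconj Tᴴ * X * mconj T) * T := by rw [h2]
      _ = Mᴴ * X * M := by
          rw [hMdef, hatM, Matrix.conjTranspose_mul, conjTranspose_mconj]
          simp only [Matrix.mul_assoc]
  have hk : ∀ k : ℕ, X = (M ^ k)ᴴ * X * M ^ k := by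
    intro k
    induction k with
    | zero => simp
    | succ k ih =>
      calc X = Mᴴ * X * M := hM
        _ = Mᴴ * ((M ^ k)ᴴ * X * M ^ k) * M := by rw [← ih]
        _ = (M ^ (k+1))ᴴ * X * M ^ (k+1) := by
            rw [pow_succ, Matrix.conjTranspose_mul]
            simp only [Matrix.mul_assoc]
  ext i j
  have hentry : ∀ k : ℕ, X i j
      = ∑ b, (∑ a, star ((M ^ k) a i) * X a b) * (M ^ k) b j := by
    intro k
    conv_lhs => rw [hk k]
    simp only [Matrix.mul_apply, Matrix.conjTranspose_apply]
  have hconv : Tendsto (fun k => ∑ b, (∑ a, star ((M ^ k) a i) * X a b) * (M ^ k) b j)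
      atTop (𝓝 0) := by
    have h0 : (0 : ℂ) = ∑ b : Fin p, (∑ a : Fin p, star (0:ℂ) * X a b) * (0:ℂ) := by
      simp
    rw [h0]
    apply tendsto_finset_sum
    intro b _
    apply Tendsto.mul _ (pow_entry_tendsto_zero M hρ b j)
    apply tendsto_finset_sum
    intro a _
    exact ((continuous_star.tendsto _).comp (pow_entry_tendsto_zero M hρ a i)).mul
      tendsto_const_nhds
  have heq : (fun k => ∑ b, (∑ a, star ((M ^ k) a i) * X a b) * (M ^ k) b j)
      = fun _ => X i j := by
    funext k; rw [← hentry k]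
  rw [heq] at hconv
  have := tendsto_nhds_unique hconv tendsto_const_nhds
  simpa using this.symm

/-- The conjugate Stein operator as an `ℝ`-linear map. -/
def steinLin {p : ℕ} (T : Matrix (Fin p) (Fin p) ℂ) :
    Matrix (Fin p) (Fin p) ℂ →ₗ[ℝ] Matrix (Fin p) (Fin p) ℂ where
  toFun X := X - Tᴴ * mconj X * T
  map_add' X Y := by
    simp only [mconj_add, Matrix.mul_add, Matrix.add_mul]
    abel
  map_smul' r X := by
    simp only [mconj_smul, Matrix.mul_smul, Matrix.smul_mul, smul_sub, RingHom.id_apply]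

lemma steinLin_apply {p : ℕ} (T X : Matrix (Fin p) (Fin p) ℂ) :
    steinLin T X = CStein T X := rfl

lemma steinLin_injective {p : ℕ} (T : Matrix (Fin p) (Fin p) ℂ)
    (hρ : spectralRadius ℂ (hatM T) < 1) : Function.Injective (steinLin T) := by
  intro X Y hXY
  have h0 : steinLin T (X - Y) = 0 := by rw [map_sub, hXY, sub_self]
  have h1 : X - Y = Tᴴ * mconj (X - Y) * T := by
    have := sub_eq_zero.mp h0
    simpa [steinLin, sub_eq_zero] using h0
  have := fixed_eq_zero T (X - Y) hρ h1
  exact sub_eq_zero.mp this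

/-- If some Hermitian `X_T` has `R_{X_T}` invertible and `ρ(T̂_{X_T}) < 1`, then `S_≥` is
nonempty: the equation `C_{T_{X_T}}(X) = H_{X_T}` has a unique Hermitian solution, which lies
in `S_≥`. -/
theorem Sge_nonempty (n m : ℕ) (A : Matrix (Fin n) (Fin n) ℂ) (B : Matrix (Fin n) (Fin m) ℂ)
    (R : Matrix (Fin m) (Fin m) ℂ) (H : Matrix (Fin n) (Fin n) ℂ)
    (hR : R.IsHermitian) (hRunit : IsUnit R) (hH : H.IsHermitian)
    (XT : Matrix (Fin n) (Fin n) ℂ) (hXT : XT.IsHermitian)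
    (hRXT : IsUnit (RX R B XT))
    (hρT : spectralRadius ℂ (hatM (TX A B R XT)) < 1) :
    (Sge A B R H).Nonempty ∧
    ∃ X : Matrix (Fin n) (Fin n) ℂ, X.IsHermitian ∧
      CStein (TX A B R XT) X = HX A B R H XT ∧
      X ∈ Sge A B R H ∧
      ∀ Y : Matrix (Fin n) (Fin n) ℂ, Y.IsHermitian →
        CStein (TX A B R XT) Y = HX A B R H XT → Y = X := by
  classical
  set T := TX A B R XT with hTdef
  have hHXh : (HX A B R H XT).IsHermitian := by
    unfold HX
    unfold Matrix.IsHermitian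
    rw [Matrix.conjTranspose_add, Matrix.conjTranspose_mul, Matrix.conjTranspose_mul,
      Matrix.conjTranspose_conjTranspose, hR.eq, hH.eq, Matrix.mul_assoc]
  have hinj := steinLin_injective T hρT
  have hsurj : Function.Surjective (steinLin T) :=
    (LinearMap.injective_iff_surjective).mp hinj
  obtain ⟨X, hXsol⟩ := hsurj (HX A B R H XT)
  have hCS : CStein T X = HX A B R H XT := by rw [← steinLin_apply, hXsol]
  have hXherm : X.IsHermitian := by
    have hconj : steinLin T Xᴴ = (steinLin T X)ᴴ := by
      show Xᴴ - Tᴴ * mconj Xᴴ * T = (X - Tᴴ * mconj X * T)ᴴ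
      rw [Matrix.conjTranspose_sub, Matrix.conjTranspose_mul, Matrix.conjTranspose_mul,
        Matrix.conjTranspose_conjTranspose, conjTranspose_mconj, Matrix.mul_assoc]
    have : steinLin T Xᴴ = steinLin T X := by
      rw [hconj, hXsol, hHXh.eq]
    exact hinj this
  have hmem : X ∈ Sge A B R H := by
    refine ⟨hXherm, XT, hXT, hRXT, hρT, ?_⟩
    rw [hCS, sub_self]
    exact Matrix.PosSemidef.zero
  refine ⟨⟨X, hmem⟩, X, hXherm, hCS, hmem, ?_⟩
  intro Y _ hYsol
  apply hinj
  rw [steinLin_apply, steinLin_apply, hCS, hYsol]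


end CDARE
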